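/- Let α₁, α₂, f₁, f₂ be indeterminates over ℂ. Define automorphisms s₁, s₂ of ℂ(α₁,α₂,f₁,f₂) by: s₁(α₁) = -α₁, s₁(α₂) = α₂ + α₁, s₁(f₁) = f₁, s₁(f₂) = f₂ + α₁/f₁; and s₂(α₂) = -α₂, s₂(α₁) = α₁ + α₂, s₂(f₂) = f₂, s₂(f₁) = f₁ - α₂/f₂. Then s₁ and s₂ satisfy the braid relation of A₂: (s₁ s₂)³ = id. -/

import Mathlib

set_option maxHeartbeats 1600000
set_option synthInstance.maxHeartbeats 400000

/-- The field ℂ(α₁, α₂, f₁, f₂) of rational functions in four indeterminates. -/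
noncomputable abbrev K : Type := FractionRing (MvPolynomial (Fin 4) ℂ)

/-- Generators: `gen 0 = α₁`, `gen 1 = α₂`, `gen 2 = f₁`, `gen 3 = f₂`. -/
noncomputable def gen (i : Fin 4) : K :=
  algebraMap (MvPolynomial (Fin 4) ℂ) K (MvPolynomial.X i)

lemma map_ne (p : MvPolynomial (Fin 4) ℂ) (h : p ≠ 0) :
    algebraMap (MvPolynomial (Fin 4) ℂ) K p ≠ 0 := fun h0 =>
  h ((IsFractionRing.to_map_eq_zero_iff (K := K)).mp h0)

lemma gen_ne (i : Fin 4) : gen i ≠ 0 :=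
  map_ne _ (MvPolynomial.X_ne_zero i)

lemma neA : gen 2 * gen 3 + gen 0 ≠ 0 := by
  have : gen 2 * gen 3 + gen 0 =
      algebraMap (MvPolynomial (Fin 4) ℂ) K
        (MvPolynomial.X 2 * MvPolynomial.X 3 + MvPolynomial.X 0) := by
    simp [gen, map_add, map_mul]
  rw [this]
  apply map_ne
  intro h
  have := congrArg (MvPolynomial.eval ![1, 0, 0, 0]) h
  simp at this

lemma neB : gen 2 * gen 3 - gen 1 ≠ 0 := by
  have : gen 2 * gen 3 - gen 1 =
      algebraMap (MvPolynomial (Fin 4) ℂ) K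
        (MvPolynomial.X 2 * MvPolynomial.X 3 - MvPolynomial.X 1) := by
    simp [gen, map_sub, map_mul]
  rw [this]
  apply map_ne
  intro h
  have := congrArg (MvPolynomial.eval ![0, 1, 0, 0]) h
  simp at this

/-- the Noumi–Yamada generators of type A₂ satisfy the
Coxeter braid relation $(s₁ s₂)^3 = 1$. -/
theorem stmt1 (s₁ s₂ : K ≃ₐ[ℂ] K)
    (h1a1 : s₁ (gen 0) = -gen 0)
    (h1a2 : s₁ (gen 1) = gen 1 + gen 0)
    (h1f1 : s₁ (gen 2) = gen 2)
    (h1f2 : s₁ (gen 3) = gen 3 + gen 0 / gen 2)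
    (h2a2 : s₂ (gen 1) = -gen 1)
    (h2a1 : s₂ (gen 0) = gen 0 + gen 1)
    (h2f2 : s₂ (gen 3) = gen 3)
    (h2f1 : s₂ (gen 2) = gen 2 - gen 1 / gen 3) :
    ∀ x : K, s₁ (s₂ (s₁ (s₂ (s₁ (s₂ x))))) = x := by
  have n2 := gen_ne 2
  have n3 := gen_ne 3
  have nA := neA
  have nB := neB
  set E : K ≃ₐ[ℂ] K := s₂.trans s₁ with hE
  have hEx : ∀ x, E x = s₁ (s₂ x) := fun x => rfl
  have hC : gen 3 + gen 0 / gen 2 ≠ 0 := by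
    intro h; apply nA
    field_simp at h
    linear_combination h
  have e0 : E (gen 0) = gen 1 := by
    rw [hEx, h2a1, map_add, h1a1, h1a2]; ring
  have e1 : E (gen 1) = -gen 0 - gen 1 := by
    rw [hEx, h2a2, map_neg, h1a2]; ring
  have e2 : E (gen 2) = gen 2 * (gen 2 * gen 3 - gen 1) / (gen 2 * gen 3 + gen 0) := by
    rw [hEx, h2f1, map_sub, map_div₀, h1f1, h1a2, h1f2]
    field_simp [n2, n3, nA, nB, hC]
    ring
  have e3 : E (gen 3) = (gen 2 * gen 3 + gen 0) / gen 2 := by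
    rw [hEx, h2f2, h1f2]
    field_simp [n2]
  have f2 : E (E (gen 2)) = (gen 2 * gen 3 - gen 1) / gen 3 := by
    rw [e2]
    simp only [map_div₀, map_mul, map_sub, map_add, map_neg, e0, e1, e2, e3]
    field_simp [n2, n3, nA, nB, hC]
    try ring
  have f3 : E (E (gen 3)) = gen 3 * (gen 2 * gen 3 + gen 0) / (gen 2 * gen 3 - gen 1) := by
    rw [e3]
    simp only [map_div₀, map_mul, map_sub, map_add, map_neg, e0, e1, e2, e3]
    field_simp [n2, n3, nA, nB, hC]
    try ring
  have g0 : E (E (E (gen 0))) = gen 0 := by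
    rw [e0, e1]
    simp only [map_sub, map_neg, e0, e1]
    ring
  have g1 : E (E (E (gen 1))) = gen 1 := by
    rw [e1]
    simp only [map_sub, map_neg, e0, e1]
    ring
  have g2 : E (E (E (gen 2))) = gen 2 := by
    rw [f2]
    simp only [map_div₀, map_mul, map_sub, map_add, map_neg, e0, e1, e2, e3]
    field_simp [n2, n3, nA, nB, hC]
    try ring
  have g3 : E (E (E (gen 3))) = gen 3 := by
    rw [f3]
    simp only [map_div₀, map_mul, map_sub, map_add, map_neg, e0, e1, e2, e3]
    field_simp [n2, n3, nA, nB, hC]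
    try ring
  have key : ∀ x : K, E (E (E x)) = x := by
    intro x
    have : (E.trans (E.trans E)).toAlgHom = AlgHom.id ℂ K := by
      apply AlgHom.coe_ringHom_injective
      apply IsLocalization.ringHom_ext (nonZeroDivisors (MvPolynomial (Fin 4) ℂ))
      apply MvPolynomial.ringHom_ext
      · intro c
        simp [RingHom.comp_apply]
        rw [show (algebraMap (MvPolynomial (Fin 4) ℂ) K) (MvPolynomial.C c)
            = algebraMap ℂ K c from (IsScalarTower.algebraMap_apply ℂ _ K c).symm]
        simp
      · intro i
        have : (algebraMap (MvPolynomial (Fin 4) ℂ) K) (MvPolynomial.X i) = gen i := rfl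
        simp only [RingHom.comp_apply, this, AlgHom.coe_toRingHom,
          AlgEquiv.toAlgHom_eq_coe, AlgHom.coe_coe, AlgEquiv.trans_apply,
          AlgHom.id_apply, RingHom.id_apply]
        fin_cases i
        · exact g0
        · exact g1
        · exact g2
        · exact g3
    have h := congrArg (fun F : K →ₐ[ℂ] K => F x) this
    simpa using h
  intro x
  have := key x
  simpa [hEx] using this
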